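/- Suppose E[‖ξ(X_1)‖_H] < ∞ and the Bochner expectation E[ξ(X_1)] = 0 in H, and let λ_t ∈ [0,1] be 𝔉_{t−1}-measurable for every t ≥ 1. Then the wealth process (K_t)_{t≥0} is a nonnegative martingale with respect to the filtration (𝔉_t) with E[K_t] = 1 for all t, and for every α ∈ (0,1), P(∃ t ≥ 1 : K_t ≥ 1/α) ≤ α. -/

import Mathlib

open MeasureTheory ProbabilityTheory
open scoped RealInnerProductSpace

lemma factor_simple {Ω β : Type*} {mβ : MeasurableSpace β} {Y : Ω → β}
    (s : @SimpleFunc Ω (mβ.comap Y) ENNReal) :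
    ∃ φ : β → ENNReal, Measurable φ ∧ ∀ ω, s ω = φ (Y ω) := by
  induction s using SimpleFunc.induction with
  | @const c A hA => ?_
  | @add f g hfg hf hg =>
    obtain ⟨φ₁, h₁, e₁⟩ := hf
    obtain ⟨φ₂, h₂, e₂⟩ := hg
    exact ⟨fun y => φ₁ y + φ₂ y, h₁.add h₂, fun ω => by simp [e₁ ω, e₂ ω]⟩
  case const =>
    obtain ⟨B, hB, rfl⟩ := MeasurableSpace.measurableSet_comap.mp hA
    refine ⟨B.indicator (fun _ => c), measurable_const.indicator hB, ?_⟩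
    intro ω
    simp [SimpleFunc.piecewise_apply, Set.indicator_apply, Set.mem_preimage]
    rfl

lemma factor_ennreal {Ω β : Type*} {mβ : MeasurableSpace β} {Y : Ω → β}
    {f : Ω → ENNReal} (hf : Measurable[mβ.comap Y] f) :
    ∃ φ : β → ENNReal, Measurable φ ∧ ∀ ω, f ω = φ (Y ω) := by
  choose φ hφ hφY using fun n => factor_simple (Y := Y) (@SimpleFunc.eapprox Ω (mβ.comap Y) f n)
  refine ⟨fun y => ⨆ n, φ n y, Measurable.iSup hφ, fun ω => ?_⟩
  rw [← @SimpleFunc.iSup_eapprox_apply Ω (mβ.comap Y) f hf ω]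
  exact iSup_congr fun n => hφY n ω

lemma factor_real {Ω β : Type*} {mβ : MeasurableSpace β} {Y : Ω → β}
    {f : Ω → ℝ} (hf : Measurable[mβ.comap Y] f) :
    ∃ φ : β → ℝ, Measurable φ ∧ ∀ ω, f ω = φ (Y ω) := by
  obtain ⟨φ₁, h₁, e₁⟩ := factor_ennreal (Y := Y)
    (f := fun ω => ENNReal.ofReal (f ω)) (ENNReal.measurable_ofReal.comp hf)
  obtain ⟨φ₂, h₂, e₂⟩ := factor_ennreal (Y := Y)
    (f := fun ω => ENNReal.ofReal (-f ω)) (ENNReal.measurable_ofReal.comp hf.neg)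
  refine ⟨fun y => (φ₁ y).toReal - (φ₂ y).toReal, h₁.ennreal_toReal.sub h₂.ennreal_toReal,
    fun ω => ?_⟩
  show f ω = (φ₁ (Y ω)).toReal - (φ₂ (Y ω)).toReal
  rw [← e₁ ω, ← e₂ ω]
  rcases le_total 0 (f ω) with h | h
  · simp [ENNReal.toReal_ofReal h, ENNReal.ofReal_of_nonpos (by linarith : -f ω ≤ 0)]
  · simp [ENNReal.toReal_ofReal (by linarith : (0:ℝ) ≤ -f ω), ENNReal.ofReal_of_nonpos h]

lemma sum_Icc_one_eq_sum_fin {γ : Type*} [AddCommMonoid γ] (f : ℕ → γ) (n : ℕ) :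
    ∑ i ∈ Finset.Icc 1 n, f i = ∑ j : Fin n, f (j + 1) := by
  induction n with
  | zero => simp
  | succ m ih =>
    rw [Finset.sum_Icc_succ_top (Nat.succ_le_succ (Nat.zero_le m)), ih, Fin.sum_univ_castSucc]
    simp

theorem wealth_is_test_martingale_and_ville
    {Ω : Type*} {mΩ : MeasurableSpace Ω} {P : Measure Ω} [IsProbabilityMeasure P]
    {𝒳 : Type*} {m𝒳 : MeasurableSpace 𝒳}
    (X : ℕ → Ω → 𝒳) (hXmeas : ∀ i, Measurable (X i))
    (hXindep : iIndepFun (m := fun _ => m𝒳) X P)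
    (hXident : ∀ i, Measure.map (X i) P = Measure.map (X 1) P)
    (ℱ : Filtration ℕ mΩ)
    (hℱ : ∀ t, ℱ t = ⨆ i ∈ Finset.Icc 1 t, MeasurableSpace.comap (X i) m𝒳)
    {H : Type*} [NormedAddCommGroup H] [InnerProductSpace ℝ H] [CompleteSpace H]
    [SecondCountableTopology H]
    (ξ : 𝒳 → H) (hξ : StronglyMeasurable ξ)
    (M : 𝒳 → ℝ) (hMmeas : Measurable M) (hMpos : ∀ x, 0 < M x)
    (hMbound : ∀ x y, -(M x) ≤ ⟪ξ x, ξ y⟫)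
    (g : ℕ → Ω → 𝒳 → ℝ)
    (hg : ∀ t ω x, g t ω x =
      (∑ i ∈ Finset.Icc 1 (t - 1), ⟪ξ (X i ω), ξ x⟫) /
        (∑ i ∈ Finset.Icc 1 (t - 1), M (X i ω)))
    (lam : ℕ → Ω → ℝ)
    (hlam_pred : ∀ t : ℕ, 1 ≤ t → Measurable[ℱ (t - 1)] (lam t))
    (hlam_mem : ∀ t ω, lam t ω ∈ Set.Icc (0 : ℝ) 1)
    (K : ℕ → Ω → ℝ)
    (hK0 : ∀ ω, K 0 ω = 1)
    (hKrec : ∀ t : ℕ, 1 ≤ t → ∀ ω, K t ω = K (t - 1) ω * (1 + lam t ω * g t ω (X t ω)))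
    (hnorm_int : Integrable (fun ω => ‖ξ (X 1 ω)‖) P)
    (hmean : ∫ ω, ξ (X 1 ω) ∂P = 0) :
    Martingale K ℱ P ∧ (∀ t ω, 0 ≤ K t ω) ∧ (∀ t, ∫ ω, K t ω ∂P = 1) ∧
      ∀ α ∈ Set.Ioo (0 : ℝ) 1, P {ω | ∃ t ≥ 1, 1 / α ≤ K t ω} ≤ ENNReal.ofReal α := by
  classical
  -- Basic facts about the distribution μ of X 1
  set μ := Measure.map (X 1) P with hμ
  have hμprob : IsProbabilityMeasure μ := Measure.isProbabilityMeasure_map (hXmeas 1).aemeasurable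
  have hξint : Integrable ξ μ := by
    rw [hμ, integrable_map_measure hξ.aestronglyMeasurable (hXmeas 1).aemeasurable]
    exact (integrable_norm_iff
      ((hξ.comp_measurable (hXmeas 1)).aestronglyMeasurable)).mp hnorm_int
  have hξmean : ∫ x, ξ x ∂μ = 0 := by
    rw [hμ, integral_map (hXmeas 1).aemeasurable hξ.aestronglyMeasurable]; exact hmean
  have hinner0 : ∀ v : H, ∫ x, ⟪v, ξ x⟫ ∂μ = 0 := fun v => by
    rw [integral_inner hξint, hξmean, inner_zero_right]
  -- g is bounded below by -1
  have hg_ge : ∀ t ω x, -1 ≤ g t ω x := by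
    intro t ω x
    rw [hg]
    by_cases hne : (Finset.Icc 1 (t - 1)).Nonempty
    · have hden : 0 < ∑ i ∈ Finset.Icc 1 (t - 1), M (X i ω) :=
        Finset.sum_pos (fun i _ => hMpos _) hne
      rw [le_div_iff₀ hden]
      calc -1 * ∑ i ∈ Finset.Icc 1 (t - 1), M (X i ω)
          = ∑ i ∈ Finset.Icc 1 (t - 1), -(M (X i ω)) := by
            rw [neg_one_mul, ← Finset.sum_neg_distrib]
        _ ≤ _ := Finset.sum_le_sum fun i _ => hMbound (X i ω) x
    · rw [Finset.not_nonempty_iff_eq_empty] at hne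
      simp [hne]
  have hfac_nonneg : ∀ t ω x, 0 ≤ 1 + lam t ω * g t ω x := by
    intro t ω x
    have h1 := hg_ge t ω x
    obtain ⟨h2, h3⟩ := hlam_mem t ω
    nlinarith
  -- nonnegativity of K
  have hKnonneg : ∀ t ω, 0 ≤ K t ω := by
    intro t
    induction t with
    | zero => intro ω; rw [hK0]; norm_num
    | succ n ih =>
      intro ω
      rw [hKrec (n + 1) (Nat.succ_le_succ (Nat.zero_le n)), Nat.add_sub_cancel]
      exact mul_nonneg (ih ω) (hfac_nonneg (n + 1) ω _)
  -- measurability of X i with respect to ℱ t for 1 ≤ i ≤ t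
  have hXF : ∀ i t : ℕ, 1 ≤ i → i ≤ t → Measurable[ℱ t] (X i) := by
    intro i t h1 h2
    have hle : MeasurableSpace.comap (X i) m𝒳 ≤ ℱ t := by
      rw [hℱ t]
      exact le_iSup₂_of_le i (Finset.mem_Icc.mpr ⟨h1, h2⟩) le_rfl
    exact fun s hs => hle _ ⟨s, hs, rfl⟩
  -- adaptedness
  have hKadapt : ∀ t, StronglyMeasurable[ℱ t] (K t) := by
    intro t
    induction t with
    | zero =>
      have : K 0 = fun _ => (1 : ℝ) := funext hK0
      rw [this]; exact stronglyMeasurable_const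
    | succ n ih =>
      have hrec : K (n + 1) =
          fun ω => K n ω * (1 + lam (n + 1) ω * g (n + 1) ω (X (n + 1) ω)) := by
        funext ω
        rw [hKrec (n + 1) (Nat.succ_le_succ (Nat.zero_le n)), Nat.add_sub_cancel]
      rw [hrec]
      have hGm : Measurable[ℱ (n + 1)] fun ω => g (n + 1) ω (X (n + 1) ω) := by
        have : (fun ω => g (n + 1) ω (X (n + 1) ω)) =
            fun ω => (∑ i ∈ Finset.Icc 1 n, ⟪ξ (X i ω), ξ (X (n + 1) ω)⟫) /
              (∑ i ∈ Finset.Icc 1 n, M (X i ω)) := by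
          funext ω; rw [hg]; norm_num
        rw [this]
        refine Measurable.div ?_ ?_
        · refine Finset.measurable_sum _ fun i hi => ?_
          rw [Finset.mem_Icc] at hi
          exact (StronglyMeasurable.inner
            (hξ.comp_measurable (hXF i (n + 1) hi.1 (hi.2.trans (Nat.le_succ n))))
            (hξ.comp_measurable
              (hXF (n + 1) (n + 1) (Nat.succ_le_succ (Nat.zero_le n)) le_rfl))).measurable
        · refine Finset.measurable_sum _ fun i hi => ?_
          rw [Finset.mem_Icc] at hi
          exact hMmeas.comp (hXF i (n + 1) hi.1 (hi.2.trans (Nat.le_succ n)))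
      have hlamm : Measurable[ℱ (n + 1)] (lam (n + 1)) := by
        have := hlam_pred (n + 1) (Nat.succ_le_succ (Nat.zero_le n))
        rw [Nat.add_sub_cancel] at this
        exact this.mono (ℱ.mono (Nat.le_succ n)) le_rfl
      exact (ih.mono (ℱ.mono (Nat.le_succ n))).mul
        ((stronglyMeasurable_const.add
          ((hlamm.stronglyMeasurable).mul hGm.stronglyMeasurable)))
  -- the key one-step identity
  have key : ∀ n : ℕ, ∀ A : Set Ω, MeasurableSet[ℱ n] A →
      ∫⁻ ω in A, ENNReal.ofReal (K (n + 1) ω) ∂P = ∫⁻ ω in A, ENNReal.ofReal (K n ω) ∂P := by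
    intro n A hA
    cases n with
    | zero =>
      have hK1eq : ∀ ω, K 1 ω = K 0 ω := by
        intro ω
        have hgz : g 1 ω (X 1 ω) = 0 := by
          rw [hg]; norm_num
        rw [hKrec 1 le_rfl ω]
        norm_num [hgz]
      exact lintegral_congr fun ω => by rw [hK1eq ω]
    | succ m =>
      have hAm : MeasurableSet A := ℱ.le (m + 1) _ hA
      have ht1 : 1 ≤ m + 2 := by omega
      have htsub : m + 2 - 1 = m + 1 := rfl
      set Y : Ω → (Fin (m + 1) → 𝒳) := fun ω j => X (j + 1) ω with hYdef
      have hYmeas : Measurable Y := measurable_pi_lambda _ fun j => hXmeas _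
      have hcomap : (ℱ (m + 1) : MeasurableSpace Ω) =
          MeasurableSpace.comap Y MeasurableSpace.pi := by
        rw [hℱ (m + 1)]
        have hpi : (MeasurableSpace.pi : MeasurableSpace (Fin (m + 1) → 𝒳)) =
            ⨆ j : Fin (m + 1), m𝒳.comap fun y => y j := rfl
        rw [hpi, MeasurableSpace.comap_iSup]
        simp_rw [MeasurableSpace.comap_comp]
        apply le_antisymm
        · refine iSup₂_le fun i hi => ?_
          rw [Finset.mem_Icc] at hi
          have hlt : i - 1 < m + 1 := by omega
          have hXi : X i = ((fun y : Fin (m + 1) → 𝒳 => y ⟨i - 1, hlt⟩) ∘ Y) := by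
            funext ω
            show X i ω = X ((i - 1) + 1) ω
            congr 1
            omega
          rw [hXi]
          exact le_iSup (fun j : Fin (m + 1) => m𝒳.comap ((fun y => y j) ∘ Y)) ⟨i - 1, hlt⟩
        · refine iSup_le fun j => ?_
          have hXj : ((fun y : Fin (m + 1) → 𝒳 => y j) ∘ Y) = X (j + 1) := rfl
          rw [hXj]
          exact le_iSup₂_of_le (j + 1)
            (Finset.mem_Icc.mpr ⟨Nat.succ_le_succ (Nat.zero_le _),
              Nat.succ_le_succ (Nat.le_of_lt_succ j.isLt)⟩) le_rfl
      -- factorizations through Y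
      have hKm : Measurable[MeasurableSpace.comap Y MeasurableSpace.pi] (K (m + 1)) := by
        rw [← hcomap]; exact (hKadapt (m + 1)).measurable
      obtain ⟨κ₀, hκ₀, hκ₀Y⟩ := factor_real hKm
      have hlamm : Measurable[MeasurableSpace.comap Y MeasurableSpace.pi] (lam (m + 2)) := by
        rw [← hcomap]
        have h := hlam_pred (m + 2) ht1
        rwa [htsub] at h
      obtain ⟨l₀, hl₀, hl₀Y⟩ := factor_real hlamm
      rw [hcomap] at hA
      obtain ⟨B, hB, hBA⟩ := MeasurableSpace.measurableSet_comap.mp hA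
      set κ : (Fin (m + 1) → 𝒳) → ℝ := fun y => max (κ₀ y) 0 with hκdef
      set l : (Fin (m + 1) → 𝒳) → ℝ := fun y => max 0 (min (l₀ y) 1) with hldef
      have hκmeas : Measurable κ := hκ₀.max measurable_const
      have hlmeas : Measurable l := measurable_const.max (hl₀.min measurable_const)
      have hκY : ∀ ω, κ (Y ω) = K (m + 1) ω := fun ω => by
        rw [hκdef]; simp only; rw [← hκ₀Y ω]; exact max_eq_left (hKnonneg (m + 1) ω)
      have hlY : ∀ ω, l (Y ω) = lam (m + 2) ω := fun ω => by
        obtain ⟨h1, h2⟩ := hlam_mem (m + 2) ω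
        rw [hldef]; simp only; rw [← hl₀Y ω, min_eq_left h2, max_eq_right h1]
      have hκnn : ∀ y, 0 ≤ κ y := fun y => le_max_right _ _
      have hl0 : ∀ y, 0 ≤ l y := fun y => le_max_left _ _
      have hl1 : ∀ y, l y ≤ 1 := fun y => max_le zero_le_one (min_le_right _ _)
      -- the payoff as a function on the product space
      set c : (Fin (m + 1) → 𝒳) → ℝ := fun y => ∑ j, M (y j) with hcdef
      set v : (Fin (m + 1) → 𝒳) → H := fun y => ∑ j, ξ (y j) with hvdef
      set G : (Fin (m + 1) → 𝒳) → 𝒳 → ℝ := fun y x => ⟪v y, ξ x⟫ / c y with hGdef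
      have hcpos : ∀ y, 0 < c y := fun y =>
        Finset.sum_pos (fun j _ => hMpos _) Finset.univ_nonempty
      have hvinner : ∀ y x, ⟪v y, ξ x⟫ = ∑ j, ⟪ξ (y j), ξ x⟫ := fun y x => by
        rw [hvdef]; exact sum_inner _ _ _
      have hGge : ∀ y x, -1 ≤ G y x := by
        intro y x
        rw [hGdef]; simp only
        rw [le_div_iff₀ (hcpos y), hvinner]
        calc -1 * c y = ∑ j, -(M (y j)) := by
              rw [hcdef, neg_one_mul, ← Finset.sum_neg_distrib]
          _ ≤ ∑ j, ⟪ξ (y j), ξ x⟫ := Finset.sum_le_sum fun j _ => hMbound _ _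
      have hGX : ∀ ω, G (Y ω) (X (m + 2) ω) = g (m + 2) ω (X (m + 2) ω) := by
        intro ω
        rw [hg (m + 2) ω (X (m + 2) ω), htsub, hGdef]
        simp only
        rw [hvinner, hcdef,
          sum_Icc_one_eq_sum_fin (fun i => ⟪ξ (X i ω), ξ (X (m + 2) ω)⟫) (m + 1),
          sum_Icc_one_eq_sum_fin (fun i => M (X i ω)) (m + 1)]
      -- integrals over μ for fixed y
      have hGymeas : ∀ y, Measurable fun x => G y x := fun y =>
        ((stronglyMeasurable_const.inner hξ).measurable).div_const _
      have hGint : ∀ y, Integrable (fun x => G y x) μ := fun y =>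
        (hξint.const_inner (v y)).div_const (c y)
      have hGmean : ∀ y, ∫ x, G y x ∂μ = 0 := by
        intro y
        rw [hGdef]; simp only
        rw [integral_div, hinner0 (v y), zero_div]
      have hfacint : ∀ y, Integrable (fun x => 1 + l y * G y x) μ := fun y =>
        (integrable_const 1).add ((hGint y).const_mul (l y))
      have hfacmean : ∀ y, ∫ x, (1 + l y * G y x) ∂μ = 1 := by
        intro y
        rw [integral_add (integrable_const 1) ((hGint y).const_mul (l y)),
          integral_const, integral_const_mul, hGmean, mul_zero, add_zero]
        simp
      have hfacnn : ∀ y x, 0 ≤ 1 + l y * G y x := by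
        intro y x
        have h1 := hGge y x
        have h2 := hl0 y
        have h3 := hl1 y
        nlinarith
      have hlint1 : ∀ y, ∫⁻ x, ENNReal.ofReal (1 + l y * G y x) ∂μ = 1 := by
        intro y
        rw [← ofReal_integral_eq_lintegral_ofReal (hfacint y)
          (Filter.Eventually.of_forall (hfacnn y)), hfacmean]
        simp
      -- measurability on the product space
      have hGPmeas : Measurable fun p : (Fin (m + 1) → 𝒳) × 𝒳 => G p.1 p.2 := by
        have hnum : StronglyMeasurable fun p : (Fin (m + 1) → 𝒳) × 𝒳 => ⟪v p.1, ξ p.2⟫ := by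
          apply StronglyMeasurable.inner
          · have hveq : (fun p : (Fin (m + 1) → 𝒳) × 𝒳 => v p.1) =
                fun p => ∑ j, ξ (p.1 j) := rfl
            rw [hveq]
            refine Finset.stronglyMeasurable_fun_sum _ fun j _ => ?_
            exact hξ.comp_measurable ((measurable_pi_apply j).comp measurable_fst)
          · exact hξ.comp_measurable measurable_snd
        have hden : Measurable fun p : (Fin (m + 1) → 𝒳) × 𝒳 => c p.1 := by
          have hceq : (fun p : (Fin (m + 1) → 𝒳) × 𝒳 => c p.1) =
              fun p => ∑ j, M (p.1 j) := rfl
          rw [hceq]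
          exact Finset.measurable_sum _ fun j _ =>
            hMmeas.comp ((measurable_pi_apply j).comp measurable_fst)
        exact hnum.measurable.div hden
      set F : (Fin (m + 1) → 𝒳) × 𝒳 → ℝ :=
        fun p => B.indicator (fun _ => (1 : ℝ)) p.1 * κ p.1 * (1 + l p.1 * G p.1 p.2) with hFdef
      have hFmeas : Measurable F :=
        (((measurable_const.indicator hB).comp measurable_fst).mul
          (hκmeas.comp measurable_fst)).mul
          (measurable_const.add ((hlmeas.comp measurable_fst).mul hGPmeas))
      -- independence and the product measure
      have hindep : IndepFun Y (X (m + 2)) P := by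
        have hd : Disjoint (Finset.Icc 1 (m + 1)) ({m + 2} : Finset ℕ) := by
          rw [Finset.disjoint_singleton_right, Finset.mem_Icc]
          omega
        have h := hXindep.indepFun_finset (Finset.Icc 1 (m + 1)) {m + 2} hd hXmeas
        have h2 := h.comp
          (φ := fun (f : (Finset.Icc 1 (m + 1) : Finset ℕ) → 𝒳) (j : Fin (m + 1)) =>
            f ⟨j + 1, Finset.mem_Icc.mpr ⟨Nat.succ_le_succ (Nat.zero_le _),
              Nat.succ_le_succ (Nat.le_of_lt_succ j.isLt)⟩⟩)
          (ψ := fun f : ({m + 2} : Finset ℕ) → 𝒳 => f ⟨m + 2, Finset.mem_singleton_self _⟩)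
          (measurable_pi_lambda _ fun j => measurable_pi_apply _)
          (measurable_pi_apply _ : Measurable fun f : ({m + 2} : Finset ℕ) → 𝒳 => f ⟨m + 2, Finset.mem_singleton_self _⟩)
        exact h2
      have hmap : Measure.map (fun ω => (Y ω, X (m + 2) ω)) P = (Measure.map Y P).prod μ := by
        rw [(indepFun_iff_map_prod_eq_prod_map_map hYmeas.aemeasurable
          (hXmeas (m + 2)).aemeasurable).mp hindep, hXident (m + 2)]
      haveI : IsProbabilityMeasure (Measure.map Y P) :=
        Measure.isProbabilityMeasure_map hYmeas.aemeasurable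
      -- pointwise identities
      have hpoint1 : ∀ ω, A.indicator (K (m + 2)) ω = F (Y ω, X (m + 2) ω) := by
        intro ω
        rw [hFdef]; simp only
        rw [hGX ω, hκY ω, hlY ω]
        have hKt : K (m + 2) ω = K (m + 1) ω * (1 + lam (m + 2) ω * g (m + 2) ω (X (m + 2) ω)) := by
          have h := hKrec (m + 2) ht1 ω
          rwa [htsub] at h
        by_cases hmem : ω ∈ A
        · have hmB : Y ω ∈ B := by rw [← hBA] at hmem; exact hmem
          rw [Set.indicator_of_mem hmem, Set.indicator_of_mem hmB, hKt, one_mul]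
        · have hmB : Y ω ∉ B := fun hc => hmem (hBA ▸ Set.mem_preimage.mpr hc)
          rw [Set.indicator_of_notMem hmem, Set.indicator_of_notMem hmB, zero_mul, zero_mul]
      have hpoint2 : ∀ ω,
          A.indicator (K (m + 1)) ω = B.indicator (fun _ => (1 : ℝ)) (Y ω) * κ (Y ω) := by
        intro ω
        rw [hκY ω]
        by_cases hmem : ω ∈ A
        · have hmB : Y ω ∈ B := by rw [← hBA] at hmem; exact hmem
          rw [Set.indicator_of_mem hmem, Set.indicator_of_mem hmB, one_mul]
        · have hmB : Y ω ∉ B := fun hc => hmem (hBA ▸ Set.mem_preimage.mpr hc)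
          rw [Set.indicator_of_notMem hmem, Set.indicator_of_notMem hmB, zero_mul]
      -- the chain of equalities
      show ∫⁻ ω in A, ENNReal.ofReal (K (m + 2) ω) ∂P = ∫⁻ ω in A, ENNReal.ofReal (K (m + 1) ω) ∂P
      calc ∫⁻ ω in A, ENNReal.ofReal (K (m + 2) ω) ∂P
          = ∫⁻ ω, ENNReal.ofReal (A.indicator (K (m + 2)) ω) ∂P := by
            rw [← lintegral_indicator hAm _]
            exact lintegral_congr fun ω => by by_cases hmem : ω ∈ A <;> simp [hmem]
        _ = ∫⁻ ω, ENNReal.ofReal (F (Y ω, X (m + 2) ω)) ∂P :=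
            lintegral_congr fun ω => by rw [hpoint1 ω]
        _ = ∫⁻ p, ENNReal.ofReal (F p) ∂(Measure.map (fun ω => (Y ω, X (m + 2) ω)) P) :=
            (lintegral_map (ENNReal.measurable_ofReal.comp hFmeas)
              (hYmeas.prodMk (hXmeas (m + 2)))).symm
        _ = ∫⁻ p, ENNReal.ofReal (F p) ∂((Measure.map Y P).prod μ) := by rw [hmap]
        _ = ∫⁻ y, ∫⁻ x, ENNReal.ofReal (F (y, x)) ∂μ ∂(Measure.map Y P) :=
            lintegral_prod _ (ENNReal.measurable_ofReal.comp hFmeas).aemeasurable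
        _ = ∫⁻ y, ENNReal.ofReal (B.indicator (fun _ => (1 : ℝ)) y * κ y) ∂(Measure.map Y P) := by
            refine lintegral_congr fun y => ?_
            have hcnn : 0 ≤ B.indicator (fun _ => (1 : ℝ)) y * κ y :=
              mul_nonneg (Set.indicator_nonneg (fun _ _ => zero_le_one) y) (hκnn y)
            calc ∫⁻ x, ENNReal.ofReal (F (y, x)) ∂μ
                = ∫⁻ x, ENNReal.ofReal (B.indicator (fun _ => (1 : ℝ)) y * κ y) *
                    ENNReal.ofReal (1 + l y * G y x) ∂μ := by
                  refine lintegral_congr fun x => ?_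
                  rw [hFdef]; simp only
                  rw [ENNReal.ofReal_mul hcnn]
              _ = ENNReal.ofReal (B.indicator (fun _ => (1 : ℝ)) y * κ y) *
                    ∫⁻ x, ENNReal.ofReal (1 + l y * G y x) ∂μ :=
                  lintegral_const_mul _ (ENNReal.measurable_ofReal.comp
                    (measurable_const.add ((hGymeas y).const_mul (l y))))
              _ = _ := by rw [hlint1 y, mul_one]
        _ = ∫⁻ ω, ENNReal.ofReal (B.indicator (fun _ => (1 : ℝ)) (Y ω) * κ (Y ω)) ∂P :=
            lintegral_map (ENNReal.measurable_ofReal.comp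
              (((measurable_const.indicator hB)).mul hκmeas)) hYmeas
        _ = ∫⁻ ω, ENNReal.ofReal (A.indicator (K (m + 1)) ω) ∂P :=
            lintegral_congr fun ω => by rw [hpoint2 ω]
        _ = ∫⁻ ω in A, ENNReal.ofReal (K (m + 1) ω) ∂P := by
            rw [← lintegral_indicator hAm _]
            exact lintegral_congr fun ω => by by_cases hmem : ω ∈ A <;> simp [hmem]
  -- total mass 1 in lintegral form
  have hK1 : ∀ n, ∫⁻ ω, ENNReal.ofReal (K n ω) ∂P = 1 := by
    intro n
    induction n with
    | zero => simp [hK0]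
    | succ n ih =>
      have h := key n Set.univ MeasurableSet.univ
      rwa [Measure.restrict_univ, ih] at h
  -- integrability
  have hKint : ∀ n, Integrable (K n) P := by
    intro n
    refine ⟨((hKadapt n).mono (ℱ.le n)).aestronglyMeasurable, ?_⟩
    rw [hasFiniteIntegral_iff_norm]
    have : ∀ ω, ENNReal.ofReal ‖K n ω‖ = ENNReal.ofReal (K n ω) := by
      intro ω; rw [Real.norm_of_nonneg (hKnonneg n ω)]
    simp_rw [this, hK1 n]
    exact ENNReal.one_lt_top
  -- expectation 1
  have hKmean : ∀ n, ∫ ω, K n ω ∂P = 1 := by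
    intro n
    rw [integral_eq_lintegral_of_nonneg_ae (Filter.Eventually.of_forall (hKnonneg n))
      ((hKadapt n).mono (ℱ.le n)).aestronglyMeasurable.aemeasurable.aestronglyMeasurable,
      hK1 n, ENNReal.toReal_one]
  -- martingale property
  have hsetint : ∀ n : ℕ, ∀ A : Set Ω, MeasurableSet[ℱ n] A →
      ∫ ω in A, K n ω ∂P = ∫ ω in A, K (n + 1) ω ∂P := by
    intro n A hA
    have h := key n A hA
    rw [integral_eq_lintegral_of_nonneg_ae (Filter.Eventually.of_forall (hKnonneg n))
        ((hKadapt n).mono (ℱ.le n)).aestronglyMeasurable.restrict,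
      integral_eq_lintegral_of_nonneg_ae (Filter.Eventually.of_forall (hKnonneg (n + 1)))
        ((hKadapt (n + 1)).mono (ℱ.le (n + 1))).aestronglyMeasurable.restrict,
      h]
  have hmart : Martingale K ℱ P :=
    martingale_of_setIntegral_eq_succ (fun t => hKadapt t) hKint hsetint
  refine ⟨hmart, hKnonneg, hKmean, ?_⟩
  -- Ville's inequality
  intro α hα
  obtain ⟨hα0, hα1⟩ := hα
  set ε : NNReal := Real.toNNReal α⁻¹ with hε
  have hεcoe : (ε : ℝ) = α⁻¹ := Real.coe_toNNReal _ (by positivity)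
  set E : ℕ → Set Ω := fun n =>
    {ω | (ε : ℝ) ≤ (Finset.range (n + 1)).sup' Finset.nonempty_range_add_one fun k => K k ω}
    with hE
  have hmax : ∀ n : ℕ, P (E n) ≤ ENNReal.ofReal α := by
    intro n
    have h := maximal_ineq hmart.submartingale (fun k ω => hKnonneg k ω) (ε := ε) n
    have h2 : ENNReal.ofReal (∫ ω in E n, K n ω ∂P) ≤ 1 := by
      refine le_trans (ENNReal.ofReal_le_ofReal
        (setIntegral_le_integral (hKint n) (Filter.Eventually.of_forall (hKnonneg n)))) ?_
      rw [hKmean n]; simp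
    have h3 : (ε : ENNReal) * P (E n) ≤ 1 := by
      have h' := le_trans h h2
      exact h'
    have h4 : P (E n) ≤ (ε : ENNReal)⁻¹ := by
      rw [ENNReal.le_inv_iff_mul_le]
      rwa [mul_comm]
    refine h4.trans ?_
    have : (ε : ENNReal) = (ENNReal.ofReal α)⁻¹ := by
      rw [hε, ← ENNReal.ofReal_inv_of_pos hα0]
      rfl
    rw [this, inv_inv]
  have hsubset : {ω | ∃ t ≥ 1, 1 / α ≤ K t ω} ⊆ ⋃ n, E n := by
    intro ω hω
    obtain ⟨t, ht1, ht2⟩ := hω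
    refine Set.mem_iUnion.mpr ⟨t, ?_⟩
    rw [hE]
    refine Set.mem_setOf.mpr (le_trans ?_ (Finset.le_sup'
      (f := fun k => K k ω) (Finset.self_mem_range_succ t)))
    rw [hεcoe, ← one_div]
    exact ht2
  have hmono : Monotone E := by
    intro a b hab
    intro ω hω
    exact le_trans hω (Finset.sup'_mono (fun k => K k ω)
      (Finset.range_subset_range.mpr (Nat.succ_le_succ hab)) Finset.nonempty_range_add_one)
  calc P {ω | ∃ t ≥ 1, 1 / α ≤ K t ω} ≤ P (⋃ n, E n) := measure_mono hsubset
    _ = ⨆ n, P (E n) := hmono.measure_iUnion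
    _ ≤ ENNReal.ofReal α := iSup_le hmax
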